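/- Let A, B ∈ M_{n,p}(K) with ker A ∩ ker B = {0} as linear maps K^p → K^n. Let E_N, F_N be the stable subspaces of the towers E_{k+1} = B^{-1}(F_k), F_{k+1} = A(E_{k+1}) starting from E_0 = F_0 = 0, and let f, g : E_N → F_N be the maps induced by A and B. Then there exist bases of E_N and F_N in which the matrix pencil of f + X g is block diagonal with each nonzero block of the form J_r(1, X) (the r×r upper triangular Jordan-type block with 1 on the diagonal and X on the superdiagonal) or L_s + X K_s (where L_s = [I_s | 0] and K_s = [0 | I_s] are s×(s+1) matrices). -/

import Mathlib

open Submodule Module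

section aux
variable {K : Type*} [Field K] {M : Type*} [AddCommGroup M] [Module K M]

/-- Linear independence of a finite family modulo a submodule. -/
def IndepMod (U : Submodule K M) {t : ℕ} (v : Fin t → M) : Prop :=
  ∀ c : Fin t → K, (∑ i, c i • v i) ∈ U → ∀ i, c i = 0

lemma indepMod_card_le [FiniteDimensional K M] {U U' : Submodule K M} (hU : U ≤ U')
    {t : ℕ} {v : Fin t → M} (hv : ∀ i, v i ∈ U') (h : IndepMod U v) :
    t + finrank K U ≤ finrank K U' := by
  classical
  set b := Module.finBasis K U with hb
  set F : Fin t ⊕ Fin (finrank K U) → U' :=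
    Sum.elim (fun i => ⟨v i, hv i⟩) (fun j => ⟨(b j : M), hU (b j).2⟩) with hF
  have hind : LinearIndependent K F := by
    rw [Fintype.linearIndependent_iff]
    intro c hc
    have hc' : (∑ i, c (Sum.inl i) • v i) + (∑ j, c (Sum.inr j) • (b j : M)) = 0 := by
      have := congrArg (fun x : U' => (x : M)) hc
      simpa [hF, Fintype.sum_sum_type, Finset.sum_apply] using this
    have hmem : (∑ i, c (Sum.inl i) • v i) ∈ U := by
      have h2 : (∑ i, c (Sum.inl i) • v i) = -(∑ j, c (Sum.inr j) • (b j : M)) :=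
        eq_neg_of_add_eq_zero_left hc'
      rw [h2]
      exact U.neg_mem (Submodule.sum_mem _ fun j _ => U.smul_mem _ (b j).2)
    have hl : ∀ i, c (Sum.inl i) = 0 := h _ hmem
    have hr : ∀ j, c (Sum.inr j) = 0 := by
      have hsum : (∑ j, c (Sum.inr j) • (b j : M)) = 0 := by
        have h3 := hc'
        simp only [fun i => hl i, zero_smul, Finset.sum_const_zero, zero_add] at h3
        exact h3
      have h4 : (∑ j, c (Sum.inr j) • b j) = (0 : U) := by
        apply Subtype.ext
        simpa using hsum
      intro j
      exact (Fintype.linearIndependent_iff.mp b.linearIndependent) _ h4 j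
    rintro (i | j)
    · exact hl i
    · exact hr j
  have hcard := hind.fintype_card_le_finrank
  simpa [add_comm] using hcard
lemma finrank_span_sup_le [FiniteDimensional K M] (U : Submodule K M) {t : ℕ} (v : Fin t → M) :
    finrank K ((span K (Set.range v)) ⊔ U : Submodule K M) ≤ t + finrank K U := by
  refine (Submodule.finrank_add_le_finrank_add_finrank _ _).trans ?_
  have := finrank_range_le_card (R := K) v
  simp only [Set.finrank, Fintype.card_fin] at this
  omega

lemma indepMod_span_sup_eq [FiniteDimensional K M] {U U' : Submodule K M} (hU : U ≤ U')
    {t : ℕ} {v : Fin t → M} (hv : ∀ i, v i ∈ U') (h : IndepMod U v)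
    (hcard : finrank K U' ≤ t + finrank K U) :
    (span K (Set.range v)) ⊔ U = U' := by
  have hle : (span K (Set.range v)) ⊔ U ≤ U' := by
    refine sup_le ?_ hU
    rw [span_le]
    rintro x ⟨i, rfl⟩; exact hv i
  refine Submodule.eq_of_le_of_finrank_le hle ?_
  have h2 : t + finrank K U ≤ finrank K ((span K (Set.range v)) ⊔ U : Submodule K M) := by
    refine indepMod_card_le le_sup_right (fun i => ?_) h
    exact Submodule.mem_sup_left (Submodule.subset_span ⟨i, rfl⟩)
  omega

/-- Extension lemma: extend an `IndepMod` family by vectors from `Z`. -/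
lemma indepMod_extend [FiniteDimensional K M] {U U' Z : Submodule K M} (hU : U ≤ U')
    (hZ : Z ≤ U') {s t : ℕ} (hst : s ≤ t) (ht : t + finrank K U ≤ finrank K U')
    {v : Fin s → M} (hv : ∀ i, v i ∈ U') (hind : IndepMod U v)
    (hspan : U' ≤ Z ⊔ (span K (Set.range v)) ⊔ U) :
    ∃ v' : Fin t → M, (∀ i, v' i ∈ U') ∧ IndepMod U v' ∧
      (∀ i : Fin t, ∀ hi : (i : ℕ) < s, v' i = v ⟨i, hi⟩) ∧
      (∀ i : Fin t, s ≤ (i : ℕ) → v' i ∈ Z) := by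
  induction t with
  | zero =>
    exact ⟨fun i => i.elim0, fun i => i.elim0, fun c _ i => i.elim0, fun i => i.elim0,
      fun i => i.elim0⟩
  | succ t ih =>
    rcases Nat.lt_or_ge t s with hlt | hge
    · have hs : s = t + 1 := le_antisymm hst hlt
      subst hs
      refine ⟨v, hv, hind, fun i hi => by rw [Fin.eta], fun i hi => ?_⟩
      exact absurd hi (by have := i.isLt; omega)
    · obtain ⟨w, hwU', hwind, hwcomp, hwZ⟩ := ih hge (by omega)
      have hproper : ¬ (Z ≤ (span K (Set.range w)) ⊔ U) := by
        intro hcon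
        have h1 : U' ≤ (span K (Set.range w)) ⊔ U := by
          refine hspan.trans (sup_le (sup_le hcon ?_) le_sup_right)
          rw [span_le]
          rintro x ⟨i, rfl⟩
          have hvw : v i = w ⟨i, by omega⟩ := (hwcomp ⟨i, by omega⟩ i.2).symm
          rw [hvw]
          exact Submodule.mem_sup_left (Submodule.subset_span ⟨_, rfl⟩)
        have h2 := Submodule.finrank_mono h1
        have h3 := finrank_span_sup_le (K := K) U w
        omega
      obtain ⟨z, hzZ, hznot⟩ := SetLike.not_le_iff_exists.mp hproper
      set w' : Fin (t+1) → M := Fin.snoc w z with hw'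
      have hcast : ∀ (j : ℕ) (h1 : j < t) (h2 : j < t+1), w' ⟨j, h2⟩ = w ⟨j, h1⟩ := by
        intro j h1 h2
        have hj : (⟨j, h2⟩ : Fin (t+1)) = Fin.castSucc ⟨j, h1⟩ := rfl
        rw [hj, hw', Fin.snoc_castSucc]
      have hlast : ∀ (h2 : t < t+1), w' ⟨t, h2⟩ = z := by
        intro h2
        have hj : (⟨t, h2⟩ : Fin (t+1)) = Fin.last t := rfl
        rw [hj, hw', Fin.snoc_last]
      refine ⟨w', ?_, ?_, ?_, ?_⟩
      · rintro ⟨iv, hiv⟩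
        rcases Nat.lt_or_ge iv t with h | h
        · rw [hcast iv h]; exact hwU' _
        · have hit : iv = t := by omega
          subst hit
          rw [hlast]; exact hZ hzZ
      · intro c hc
        rw [Fin.sum_univ_castSucc] at hc
        simp only [hw', Fin.snoc_castSucc, Fin.snoc_last] at hc
        have hlz : c (Fin.last t) = 0 := by
          by_contra hne
          apply hznot
          have hz2 : z = (c (Fin.last t))⁻¹ •
              ((∑ i : Fin t, c i.castSucc • w i + c (Fin.last t) • z)
                - ∑ i : Fin t, c i.castSucc • w i) := by
            rw [add_sub_cancel_left, smul_smul, inv_mul_cancel₀ hne, one_smul]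
          rw [hz2]
          refine Submodule.smul_mem _ _ (Submodule.sub_mem _ (Submodule.mem_sup_right hc) ?_)
          exact Submodule.mem_sup_left (Submodule.sum_mem _ fun i _ =>
            Submodule.smul_mem _ _ (Submodule.subset_span ⟨i, rfl⟩))
        have hrest : ∀ i : Fin t, c i.castSucc = 0 := by
          apply hwind
          rw [hlz, zero_smul, add_zero] at hc
          exact hc
        rintro ⟨iv, hiv⟩
        rcases Nat.lt_or_ge iv t with h | h
        · exact hrest ⟨iv, h⟩
        · have hit : iv = t := by omega
          subst hit
          exact hlz
      · rintro ⟨iv, hiv⟩ hi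
        have hi' : iv < s := hi
        rw [hcast iv (by omega)]
        exact hwcomp _ hi'
      · rintro ⟨iv, hiv⟩ hi
        rcases Nat.lt_or_ge iv t with h | h
        · rw [hcast iv h]
          exact hwZ _ hi
        · have hit : iv = t := by omega
          subst hit
          rw [hlast]
          exact hzZ
lemma sum_extend {β : Type*} [AddCommMonoid β] {a b : ℕ} (h : b ≤ a) (v : Fin a → β)
    (hv : ∀ i : Fin a, b ≤ (i : ℕ) → v i = 0) :
    ∑ i, v i = ∑ j : Fin b, v ⟨j, lt_of_lt_of_le j.2 h⟩ := by
  classical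
  set G : ℕ → β := fun i => if hi : i < a then v ⟨i, hi⟩ else 0 with hG
  have e1 : ∑ i, v i = ∑ i ∈ Finset.range a, G i := by
    rw [← Fin.sum_univ_eq_sum_range]
    exact Finset.sum_congr rfl fun i _ => by simp [hG, i.isLt]
  have e2 : ∑ i ∈ Finset.range a, G i = ∑ i ∈ Finset.range b, G i := by
    refine (Finset.sum_subset (Finset.range_subset_range.mpr h) fun i hia hib => ?_).symm
    simp only [Finset.mem_range] at hia hib
    simp [hG, hia, hv ⟨i, hia⟩ (Nat.le_of_not_lt hib)]
  have e3 : ∑ i ∈ Finset.range b, G i = ∑ j : Fin b, v ⟨j, lt_of_lt_of_le j.2 h⟩ := by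
    rw [← Fin.sum_univ_eq_sum_range]
    refine Finset.sum_congr rfl fun j _ => ?_
    have : (j : ℕ) < a := lt_of_lt_of_le j.2 h
    simp [hG, this]
  rw [e1, e2, e3]

lemma nat_mono_of_succ {u : ℕ → ℕ} (h : ∀ k, u k ≤ u (k + 1)) :
    ∀ {a b : ℕ}, a ≤ b → u a ≤ u b := by
  intro a b hab
  induction b with
  | zero => simp_all
  | succ b ih =>
    rcases Nat.lt_or_ge a (b + 1) with h1 | h1
    · exact (ih (by omega)).trans (h b)
    · have : a = b + 1 := by omega
      subst this; rfl

lemma nat_telescope {u : ℕ → ℕ} (h : ∀ k, u k ≤ u (k + 1)) (N : ℕ) :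
    ∑ k ∈ Finset.range N, (u (k + 1) - u k) = u N - u 0 := by
  induction N with
  | zero => simp
  | succ N ih =>
    rw [Finset.sum_range_succ, ih]
    have h1 : u 0 ≤ u N := nat_mono_of_succ h (by omega)
    have h2 : u N ≤ u (N + 1) := h N
    omega

variable {M' : Type*} [AddCommGroup M'] [Module K M']

/-- The key step: choosing one level of the chain family. -/
lemma crux_step [FiniteDimensional K M] [FiniteDimensional K M'] (f : M →ₗ[K] M')
    {E1 E2 : Submodule K M} (hE : E1 ≤ E2) {s : ℕ} (w : Fin s → M')
    (hw : ∀ i, w i ∈ E2.map f) (hwind : IndepMod (E1.map f) w) :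
    s ≤ finrank K (E2.map f) - finrank K (E1.map f) ∧
    finrank K (E2.map f) - finrank K (E1.map f) ≤ finrank K E2 - finrank K E1 ∧
    ∃ x : Fin (finrank K E2 - finrank K E1) → M,
      (∀ i, x i ∈ E2) ∧ IndepMod E1 x ∧
      (∀ i : Fin (finrank K E2 - finrank K E1), ∀ hi : (i : ℕ) < s, f (x i) = w ⟨i, hi⟩) ∧
      (∀ i : Fin (finrank K E2 - finrank K E1),
        finrank K (E2.map f) - finrank K (E1.map f) ≤ (i : ℕ) → f (x i) = 0) ∧
      (∀ c : Fin (finrank K E2 - finrank K E1) → K,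
        (∑ i, c i • f (x i)) ∈ E1.map f →
        ∀ i : Fin (finrank K E2 - finrank K E1),
          (i : ℕ) < finrank K (E2.map f) - finrank K (E1.map f) → c i = 0) := by
  classical
  set F1 := E1.map f with hF1
  set F2 := E2.map f with hF2
  set a := finrank K E2 - finrank K E1 with ha
  set b := finrank K F2 - finrank K F1 with hb
  have hF12 : F1 ≤ F2 := Submodule.map_mono hE
  have hfr1 : finrank K F1 ≤ finrank K F2 := Submodule.finrank_mono hF12
  have hfrE : finrank K E1 ≤ finrank K E2 := Submodule.finrank_mono hE
  have hsb' : s + finrank K F1 ≤ finrank K F2 := indepMod_card_le hF12 hw hwind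
  have hsb : s ≤ b := by omega
  -- extend w to u : Fin b
  obtain ⟨u, huF2, huind, hucomp, -⟩ :=
    indepMod_extend (U := F1) (U' := F2) (Z := F2) hF12 le_rfl hsb (by omega) hw hwind
      (le_sup_of_le_left le_sup_left)
  -- choose preimages
  have hpre : ∀ i, ∃ y, y ∈ E2 ∧ f y = u i := fun i => Submodule.mem_map.mp (huF2 i)
  choose x0 hx0mem hx0f using hpre
  have hx0ind : IndepMod E1 x0 := by
    intro c hc i
    refine huind c ?_ i
    have : f (∑ j, c j • x0 j) ∈ F1 := Submodule.mem_map_of_mem hc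
    simpa [map_sum, hx0f] using this
  have hba' : b + finrank K E1 ≤ finrank K E2 := indepMod_card_le hE hx0mem hx0ind
  have hba : b ≤ a := by omega
  -- the span of u over F1 is everything
  have huspan : (span K (Set.range u)) ⊔ F1 = F2 :=
    indepMod_span_sup_eq hF12 huF2 huind (by omega)
  -- the kernel + x0 + E1 spans E2
  have hZspan : E2 ≤ (LinearMap.ker f ⊓ E2) ⊔ (span K (Set.range x0)) ⊔ E1 := by
    intro y hy
    have hfy : f y ∈ (span K (Set.range u)) ⊔ F1 := by rw [huspan]; exact Submodule.mem_map_of_mem hy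
    obtain ⟨p, hp, q, hq, hpq⟩ := Submodule.mem_sup.mp hfy
    obtain ⟨c, hc⟩ := (mem_span_range_iff_exists_fun K).mp hp
    obtain ⟨e1, he1, hfe1⟩ := Submodule.mem_map.mp hq
    set z := y - (∑ i, c i • x0 i) - e1 with hz
    have hzker : z ∈ LinearMap.ker f ⊓ E2 := by
      refine Submodule.mem_inf.mpr ⟨?_, ?_⟩
      · rw [LinearMap.mem_ker, hz]
        simp only [map_sub, map_sum, map_smul, hx0f, hfe1]
        rw [hc, ← hpq]
        abel
      · exact Submodule.sub_mem _ (Submodule.sub_mem _ hy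
          (Submodule.sum_mem _ fun i _ => Submodule.smul_mem _ _ (hx0mem i))) (hE he1)
    have : y = z + (∑ i, c i • x0 i) + e1 := by rw [hz]; abel
    rw [this]
    refine Submodule.add_mem _ (Submodule.add_mem _ ?_ ?_) ?_
    · exact Submodule.mem_sup_left (Submodule.mem_sup_left hzker)
    · exact Submodule.mem_sup_left (Submodule.mem_sup_right
        (Submodule.sum_mem _ fun i _ => Submodule.smul_mem _ _ (Submodule.subset_span ⟨i, rfl⟩)))
    · exact Submodule.mem_sup_right he1
  -- extend x0 by kernel vectors
  obtain ⟨x, hxmem, hxind, hxcomp, hxZ⟩ :=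
    indepMod_extend (U := E1) (U' := E2) (Z := LinearMap.ker f ⊓ E2) hE inf_le_right hba
      (by omega) hx0mem hx0ind hZspan
  refine ⟨hsb, hba, x, hxmem, hxind, ?_, ?_, ?_⟩
  · intro i hi
    have h1 : x i = x0 ⟨i, by omega⟩ := hxcomp i (by omega)
    rw [h1, hx0f]
    exact hucomp ⟨i, by omega⟩ hi
  · intro i hi
    have := hxZ i hi
    exact (LinearMap.mem_ker.mp this.1)
  · intro c hc i hib
    -- rewrite the sum as a sum over Fin b against u
    set c' : Fin b → K := fun j => c ⟨j, by omega⟩ with hc'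
    have hfx : ∀ j : Fin b, f (x ⟨j, by omega⟩) = u j := by
      intro j
      rw [hxcomp ⟨j, by omega⟩ j.2, hx0f]
    have hsum : (∑ i, c i • f (x i)) = ∑ j : Fin b, c' j • u j := by
      set G : ℕ → M' := fun i => if h : i < a then c ⟨i, h⟩ • f (x ⟨i, h⟩) else 0 with hG
      have e1 : (∑ i, c i • f (x i)) = ∑ i ∈ Finset.range a, G i := by
        rw [← Fin.sum_univ_eq_sum_range]
        refine Finset.sum_congr rfl fun i _ => ?_
        simp [hG, i.isLt, Fin.eta]
      have e2 : ∑ i ∈ Finset.range a, G i = ∑ i ∈ Finset.range b, G i := by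
        refine (Finset.sum_subset (Finset.range_subset_range.mpr hba) fun i hia hib' => ?_).symm
        simp only [Finset.mem_range] at hia hib'
        have h0 : f (x ⟨i, hia⟩) = 0 :=
          LinearMap.mem_ker.mp (hxZ ⟨i, hia⟩ (by simpa using hib')).1
        simp [hG, hia, h0]
      have e3 : ∑ i ∈ Finset.range b, G i = ∑ j : Fin b, c' j • u j := by
        rw [← Fin.sum_univ_eq_sum_range]
        refine Finset.sum_congr rfl fun j _ => ?_
        have hja : (j : ℕ) < a := by omega
        simp only [hG, hja, dif_pos]
        rw [hc']
        congr 1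
        exact hfx j
      rw [e1, e2, e3]
    rw [hsum] at hc
    exact huind c' hc ⟨i, hib⟩
lemma span_eq_of_indep [FiniteDimensional K M] {ι : Type*} [Fintype ι] (v : ι → M)
    (U' : Submodule K M) (hmem : ∀ q, v q ∈ U')
    (hind : ∀ c : ι → K, (∑ q, c q • v q) = 0 → ∀ q, c q = 0)
    (hcard : finrank K U' ≤ Fintype.card ι) :
    span K (Set.range v) = U' ∧ LinearIndependent K v := by
  classical
  have hlin : LinearIndependent K v := Fintype.linearIndependent_iff.mpr hind
  set σ : ι ≃ Fin (Fintype.card ι) := Fintype.equivFin ι with hσ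
  set v' : Fin (Fintype.card ι) → M := v ∘ σ.symm with hv'
  have hind' : IndepMod (⊥ : Submodule K M) v' := by
    intro c hc q
    rw [Submodule.mem_bot] at hc
    have hc2 : (∑ q, c (σ q) • v q) = 0 := by
      rw [← hc, ← Equiv.sum_comp σ (fun i => c i • v' i)]
      exact Finset.sum_congr rfl fun q _ => by simp [hv']
    have := hind _ hc2 (σ.symm q)
    simpa using this
  have hmem' : ∀ i, v' i ∈ U' := fun i => hmem _
  have hspan := indepMod_span_sup_eq bot_le hmem' hind' (by simp [hcard])
  rw [sup_bot_eq] at hspan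
  have hrange : Set.range v' = Set.range v := σ.symm.surjective.range_comp v
  rw [hrange] at hspan
  exact ⟨hspan, hlin⟩

theorem kronecker_chains [FiniteDimensional K M] [FiniteDimensional K M']
    (f g : M →ₗ[K] M') (E : ℕ → Submodule K M) (hE0 : E 0 = ⊥)
    (hEs : ∀ k, E (k + 1) = ((E k).map f).comap g) (N : ℕ) (hN : E (N + 1) = E N) :
    ∃ (m : ℕ) (r c : Fin m → ℕ) (e : (Σ i : Fin m, Fin (c i)) → M)
      (φ : (Σ i : Fin m, Fin (r i)) → M'),
      (∀ i, c i = r i ∨ c i = r i + 1) ∧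
      LinearIndependent K e ∧ span K (Set.range e) = E N ∧
      LinearIndependent K φ ∧ span K (Set.range φ) = (E N).map f ∧
      (∀ i (j : Fin (c i)) (h : (j : ℕ) < r i), f (e ⟨i, j⟩) = φ ⟨i, ⟨j, h⟩⟩) ∧
      (∀ i (j : Fin (c i)), r i ≤ (j : ℕ) → f (e ⟨i, j⟩) = 0) ∧
      (∀ i (j : Fin (c i)) (h : 0 < (j : ℕ)) (h2 : (j : ℕ) - 1 < r i),
        g (e ⟨i, j⟩) = φ ⟨i, ⟨(j : ℕ) - 1, h2⟩⟩) ∧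
      (∀ i (j : Fin (c i)), 0 < (j : ℕ) → (j : ℕ) - 1 < r i) ∧
      (∀ i (j : Fin (c i)), (j : ℕ) = 0 → g (e ⟨i, j⟩) = 0) := by
  classical
  -- monotonicity and stabilization of the tower
  have hmono : ∀ k, E k ≤ E (k + 1) := by
    intro k
    induction k with
    | zero => rw [hE0]; exact bot_le
    | succ k ih =>
      rw [hEs k, hEs (k + 1)]
      exact Submodule.comap_mono (Submodule.map_mono ih)
  have hmono' : ∀ {a b : ℕ}, a ≤ b → E a ≤ E b := by
    intro a b hab
    induction b with
    | zero => have : a = 0 := by omega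
              subst this; rfl
    | succ b ih =>
      rcases Nat.lt_or_ge a (b + 1) with h1 | h1
      · exact (ih (by omega)).trans (hmono b)
      · have : a = b + 1 := by omega
        subst this; rfl
  have hstab : ∀ l, N ≤ l → E l = E N := by
    intro l hl
    induction l with
    | zero => have : N = 0 := by omega
              subst this; rfl
    | succ l ih =>
      rcases Nat.lt_or_ge N (l + 1) with h1 | h1
      · have hEl : E l = E N := ih (by omega)
        calc E (l + 1) = ((E l).map f).comap g := hEs l
        _ = ((E N).map f).comap g := by rw [hEl]
        _ = E (N + 1) := (hEs N).symm
        _ = E N := hN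
      · have : N = l + 1 := by omega
        subst this; rfl
  -- sizes
  set A : ℕ → ℕ := fun l => finrank K (E (l + 1)) - finrank K (E l) with hA
  set Bp : ℕ → ℕ := fun l => finrank K ((E (l + 1)).map f) - finrank K ((E l).map f) with hBp
  have hAstab : ∀ l, N ≤ l → A l = 0 := by
    intro l hl
    simp only [hA]
    rw [hstab l hl, hstab (l + 1) (by omega)]
    omega
  have hBstab : ∀ l, N ≤ l → Bp l = 0 := by
    intro l hl
    simp only [hBp]
    rw [hstab l hl, hstab (l + 1) (by omega)]
    omega
  -- the property of a global chain family
  set P : ∀ l : ℕ, (Fin (A l) → M) → (Fin (A (l + 1)) → M) → Prop := fun l xl xl1 =>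
    (∀ i, xl i ∈ E (l + 1)) ∧ IndepMod (E l) xl ∧
    (∀ j : Fin (A l), ∀ hj : (j : ℕ) < A (l + 1), f (xl j) = g (xl1 ⟨j, hj⟩)) ∧
    (∀ j : Fin (A l), Bp l ≤ (j : ℕ) → f (xl j) = 0) ∧
    (∀ c : Fin (A l) → K, (∑ i, c i • f (xl i)) ∈ (E l).map f →
      ∀ j : Fin (A l), (j : ℕ) < Bp l → c j = 0) ∧
    A (l + 1) ≤ Bp l ∧ Bp l ≤ A l with hP
  -- the base case of the downward recursion
  have hbase : ∀ l, N ≤ l → P l (fun _ => 0) (fun _ => 0) := by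
    intro l hl
    have h0 : A l = 0 := hAstab l hl
    have h0' : A (l + 1) = 0 := hAstab (l + 1) (by omega)
    have h0'' : Bp l = 0 := hBstab l hl
    refine ⟨?_, ?_, ?_, ?_, ?_, by omega, by omega⟩
    · intro i; exact absurd i.isLt (by omega)
    · intro c hc i; exact absurd i.isLt (by omega)
    · intro j; exact absurd j.isLt (by omega)
    · intro j; exact absurd j.isLt (by omega)
    · intro c hc j; exact absurd j.isLt (by omega)
  -- one can replace the junk below level k+1 by a good level k
  have hstep : ∀ k, (∃ x : ∀ l : ℕ, Fin (A l) → M, ∀ l, k + 1 ≤ l → P l (x l) (x (l + 1))) →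
      (∃ x : ∀ l : ℕ, Fin (A l) → M, ∀ l, k ≤ l → P l (x l) (x (l + 1))) := by
    intro k hx
    obtain ⟨x, hxP⟩ := hx
    -- the input family
    set w : Fin (A (k + 1)) → M' := fun i => g (x (k + 1) i) with hw
    have hwmem : ∀ i, w i ∈ (E (k + 1)).map f := by
      intro i
      have h1 : x (k + 1) i ∈ E (k + 2) := by
        rcases Nat.lt_or_ge (k + 1) N with h | h
        · exact (hxP (k + 1) le_rfl).1 i
        · exact absurd i.isLt (by have := hAstab (k + 1) h; omega)
      rw [hEs (k + 1)] at h1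
      exact h1
    have hwind : IndepMod ((E k).map f) w := by
      intro c hc i
      rcases Nat.lt_or_ge (k + 1) N with h | h
      swap
      · exact absurd i.isLt (by have := hAstab (k + 1) h; omega)
      have h1 : (∑ i, c i • x (k + 1) i) ∈ E (k + 1) := by
        rw [hEs k]
        rw [Submodule.mem_comap]
        have : g (∑ i, c i • x (k + 1) i) = ∑ i, c i • w i := by
          simp [hw, map_sum]
        rw [this]
        exact hc
      exact (hxP (k + 1) le_rfl).2.1 c h1 i
    obtain ⟨hsb, hba, xk, hxkmem, hxkind, hxkrel, hxkz, hxkfind⟩ :=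
      crux_step f (hmono k) w hwmem hwind
    refine ⟨Function.update x k xk, ?_⟩
    intro l hl
    rcases Nat.lt_or_ge k l with h | h
    · have h1 : Function.update x k xk l = x l := Function.update_of_ne (by omega) _ _
      have h2 : Function.update x k xk (l + 1) = x (l + 1) := Function.update_of_ne (by omega) _ _
      rw [h1, h2]
      exact hxP l (by omega)
    · have hlk : l = k := by omega
      subst hlk
      have h1 : Function.update x l xk l = xk := Function.update_self _ _ _
      have h2 : Function.update x l xk (l + 1) = x (l + 1) := Function.update_of_ne (by omega) _ _
      rw [h1, h2]
      exact ⟨hxkmem, hxkind, fun j hj => hxkrel j hj, hxkz, hxkfind, hsb, hba⟩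
  -- iterate
  have hD : ∀ j, ∃ x : ∀ l : ℕ, Fin (A l) → M, ∀ l, N - j ≤ l → P l (x l) (x (l + 1)) := by
    intro j
    induction j with
    | zero => exact ⟨fun _ _ => 0, fun l hl => hbase l (by omega)⟩
    | succ j ih =>
      rcases Nat.lt_or_ge (N - j) 1 with h | h
      · obtain ⟨x, hx⟩ := ih
        exact ⟨x, fun l hl => hx l (by omega)⟩
      · have : N - j = (N - (j + 1)) + 1 := by omega
        rw [this] at ih
        obtain ⟨x, hx⟩ := hstep (N - (j + 1)) ih
        exact ⟨x, hx⟩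
  obtain ⟨x, hx⟩ := hD N
  have hPall : ∀ l, P l (x l) (x (l + 1)) := fun l => hx l (by omega)
  have hxmem : ∀ l (i : Fin (A l)), x l i ∈ E (l + 1) := fun l => (hPall l).1
  have hxind : ∀ l, IndepMod (E l) (x l) := fun l => (hPall l).2.1
  have hxrel : ∀ l (j : Fin (A l)) (hj : (j : ℕ) < A (l + 1)),
      f (x l j) = g (x (l + 1) ⟨j, hj⟩) := fun l => (hPall l).2.2.1
  have hxz : ∀ l (j : Fin (A l)), Bp l ≤ (j : ℕ) → f (x l j) = 0 := fun l => (hPall l).2.2.2.1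
  have hxfind : ∀ l (c : Fin (A l) → K), (∑ i, c i • f (x l i)) ∈ (E l).map f →
      ∀ j : Fin (A l), (j : ℕ) < Bp l → c j = 0 := fun l => (hPall l).2.2.2.2.1
  have hAB : ∀ l, A (l + 1) ≤ Bp l := fun l => (hPall l).2.2.2.2.2.1
  have hBA : ∀ l, Bp l ≤ A l := fun l => (hPall l).2.2.2.2.2.2
  have hAanti : ∀ {a b : ℕ}, a ≤ b → A b ≤ A a := by
    intro a b hab
    induction b with
    | zero => have : a = 0 := by omega
              subst this; rfl
    | succ b ih =>
      rcases Nat.lt_or_ge a (b + 1) with h1 | h1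
      · exact ((hAB b).trans (hBA b)).trans (ih (by omega))
      · have : a = b + 1 := by omega
        subst this; rfl
  -- chain lengths
  have hccex : ∀ i : ℕ, ∃ k, A k ≤ i := fun i => ⟨N, by rw [hAstab N le_rfl]; omega⟩
  have hrrex : ∀ i : ℕ, ∃ k, Bp k ≤ i := fun i => ⟨N, by rw [hBstab N le_rfl]; omega⟩
  set cc : ℕ → ℕ := fun i => Nat.find (hccex i) with hccdef
  set rr : ℕ → ℕ := fun i => Nat.find (hrrex i) with hrrdef
  have hcc : ∀ (i k : ℕ), i < A k ↔ k < cc i := by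
    intro i k
    constructor
    · intro h
      by_contra hcon
      have h1 : A k ≤ A (cc i) := hAanti (by omega)
      have h2 : A (cc i) ≤ i := Nat.find_spec (hccex i)
      omega
    · intro h
      have := Nat.find_min (hccex i) h
      omega
  have hrr : ∀ (i k : ℕ), i < Bp k ↔ k < rr i := by
    intro i k
    constructor
    · intro h
      by_contra hcon
      have hanti : Bp (cc i) ≤ Bp k → True := fun _ => trivial
      have h1 : Bp k ≤ i := by
        have h2 : Bp (rr i) ≤ i := Nat.find_spec (hrrex i)
        have h3 : Bp k ≤ Bp (rr i) := by
          -- Bp is antitone: Bp (l+1) ≤ A (l+1) ≤ Bp l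
          have hBanti : ∀ {a b : ℕ}, a ≤ b → Bp b ≤ Bp a := by
            intro a b hab
            induction b with
            | zero => have : a = 0 := by omega
                      subst this; rfl
            | succ b ih =>
              rcases Nat.lt_or_ge a (b + 1) with hh | hh
              · exact ((hBA (b + 1)).trans (hAB b)).trans (ih (by omega))
              · have : a = b + 1 := by omega
                subst this; rfl
          exact hBanti (by omega)
        omega
      omega
    · intro h
      have := Nat.find_min (hrrex i) h
      omega
  have hccN : ∀ i, cc i ≤ N := fun i => Nat.find_le (by rw [hAstab N le_rfl]; omega)
  have hrrN : ∀ i, rr i ≤ N := fun i => Nat.find_le (by rw [hBstab N le_rfl]; omega)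
  have hrc1 : ∀ i, rr i ≤ cc i := by
    intro i
    by_contra hcon
    have h1 : cc i < rr i := by omega
    have h2 : i < Bp (cc i) := (hrr i (cc i)).mpr h1
    have h3 : i < A (cc i) := lt_of_lt_of_le h2 (hBA (cc i))
    have := (hcc i (cc i)).mp h3
    omega
  have hrc2 : ∀ i, cc i ≤ rr i + 1 := by
    intro i
    by_contra hcon
    have h1 : rr i + 1 < cc i := by omega
    have h2 : i < A (rr i + 1) := (hcc i (rr i + 1)).mpr h1
    have h3 : i < Bp (rr i) := lt_of_lt_of_le h2 (hAB (rr i))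
    have := (hrr i (rr i)).mp h3
    omega
  -- global families
  set m := A 0 with hm
  set vE : (Σ k : Fin N, Fin (A k)) → M := fun q => x q.1 q.2 with hvE
  set vF : (Σ k : Fin N, Fin (Bp k)) → M' :=
    fun q => f (x q.1 ⟨(q.2 : ℕ), lt_of_lt_of_le q.2.isLt (hBA q.1)⟩) with hvF
  -- key linear independence lemmas by downward filtration
  have keyE : ∀ d, ∀ cf : (∀ l : ℕ, Fin (A l) → K),
      (∑ l ∈ Finset.range d, ∑ i, cf l i • x l i) = 0 → ∀ l, l < d → ∀ i, cf l i = 0 := by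
    intro d
    induction d with
    | zero => intro cf _ l hl; omega
    | succ d ih =>
      intro cf hsum l hld
      have hlow : (∑ l ∈ Finset.range d, ∑ i, cf l i • x l i) ∈ E d := by
        refine Submodule.sum_mem _ fun l' hl' => Submodule.sum_mem _ fun i _ =>
          Submodule.smul_mem _ _ (hmono' ?_ (hxmem l' i))
        simp only [Finset.mem_range] at hl'
        omega
      have htop : (∑ i, cf d i • x d i) ∈ E d := by
        have heq : (∑ i, cf d i • x d i) =
            (∑ l ∈ Finset.range (d + 1), ∑ i, cf l i • x l i)
              - (∑ l ∈ Finset.range d, ∑ i, cf l i • x l i) := by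
          rw [Finset.sum_range_succ]; abel
        rw [heq, hsum, zero_sub]
        exact Submodule.neg_mem _ hlow
      have hcd : ∀ i, cf d i = 0 := hxind d _ htop
      have hzero : (∑ i, cf d i • x d i) = 0 := by
        simp [fun i => hcd i]
      have hsum' : (∑ l ∈ Finset.range d, ∑ i, cf l i • x l i) = 0 := by
        have := hsum
        rw [Finset.sum_range_succ, hzero, add_zero] at this
        exact this
      intro i
      rcases Nat.lt_or_ge l d with h | h
      · exact ih cf hsum' l h i
      · have : l = d := by omega
        subst this
        exact hcd i
  have keyF : ∀ d, ∀ cf : (∀ l : ℕ, Fin (Bp l) → K),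
      (∑ l ∈ Finset.range d, ∑ i : Fin (Bp l),
        cf l i • f (x l ⟨(i : ℕ), lt_of_lt_of_le i.isLt (hBA l)⟩)) = 0 →
      ∀ l, l < d → ∀ i, cf l i = 0 := by
    intro d
    induction d with
    | zero => intro cf _ l hl; omega
    | succ d ih =>
      intro cf hsum l hld
      have hlow : (∑ l ∈ Finset.range d, ∑ i : Fin (Bp l),
          cf l i • f (x l ⟨(i : ℕ), lt_of_lt_of_le i.isLt (hBA l)⟩)) ∈ (E d).map f := by
        refine Submodule.sum_mem _ fun l' hl' => Submodule.sum_mem _ fun i _ =>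
          Submodule.smul_mem _ _ ?_
        simp only [Finset.mem_range] at hl'
        exact Submodule.map_mono (hmono' (by omega)) (Submodule.mem_map_of_mem (hxmem l' _))
      have htop : (∑ i : Fin (Bp d), cf d i • f (x d ⟨(i : ℕ), lt_of_lt_of_le i.isLt (hBA d)⟩))
          ∈ (E d).map f := by
        have heq : (∑ i : Fin (Bp d), cf d i • f (x d ⟨(i : ℕ), lt_of_lt_of_le i.isLt (hBA d)⟩)) =
            (∑ l ∈ Finset.range (d + 1), ∑ i : Fin (Bp l),
              cf l i • f (x l ⟨(i : ℕ), lt_of_lt_of_le i.isLt (hBA l)⟩))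
              - (∑ l ∈ Finset.range d, ∑ i : Fin (Bp l),
              cf l i • f (x l ⟨(i : ℕ), lt_of_lt_of_le i.isLt (hBA l)⟩)) := by
          rw [Finset.sum_range_succ]; abel
        rw [heq, hsum, zero_sub]
        exact Submodule.neg_mem _ hlow
      -- pad the coefficients to Fin (A d)
      set c' : Fin (A d) → K := fun j => if h : (j : ℕ) < Bp d then cf d ⟨j, h⟩ else 0 with hc'
      have hpad : (∑ j, c' j • f (x d j)) =
          (∑ i : Fin (Bp d), cf d i • f (x d ⟨(i : ℕ), lt_of_lt_of_le i.isLt (hBA d)⟩)) := by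
        rw [sum_extend (hBA d) (fun j => c' j • f (x d j))
          (fun j hj => by simp [hc', Nat.not_lt.mpr hj])]
        refine Finset.sum_congr rfl fun i _ => ?_
        simp [hc', i.isLt]
      have hc'mem : (∑ j, c' j • f (x d j)) ∈ (E d).map f := by rw [hpad]; exact htop
      have hcd : ∀ i, cf d i = 0 := by
        intro i
        have := hxfind d c' hc'mem ⟨(i : ℕ), lt_of_lt_of_le i.isLt (hBA d)⟩ i.isLt
        simpa [hc', i.isLt] using this
      have hzero : (∑ i : Fin (Bp d),
          cf d i • f (x d ⟨(i : ℕ), lt_of_lt_of_le i.isLt (hBA d)⟩)) = 0 := by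
        simp [fun i => hcd i]
      have hsum' : (∑ l ∈ Finset.range d, ∑ i : Fin (Bp l),
          cf l i • f (x l ⟨(i : ℕ), lt_of_lt_of_le i.isLt (hBA l)⟩)) = 0 := by
        have := hsum
        rw [Finset.sum_range_succ, hzero, add_zero] at this
        exact this
      intro i
      rcases Nat.lt_or_ge l d with h | h
      · exact ih cf hsum' l h i
      · have : l = d := by omega
        subst this
        exact hcd i
  -- independence of the global families
  have hvEind : ∀ cs : (Σ k : Fin N, Fin (A k)) → K, (∑ q, cs q • vE q) = 0 → ∀ q, cs q = 0 := by
    intro cs hsum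
    set cf : ∀ l : ℕ, Fin (A l) → K :=
      fun l => if h : l < N then (fun i => cs ⟨⟨l, h⟩, i⟩) else fun _ => 0 with hcf
    have h1 : (∑ l ∈ Finset.range N, ∑ i, cf l i • x l i) = 0 := by
      rw [← Fin.sum_univ_eq_sum_range (fun l => ∑ i, cf l i • x l i) N]
      rw [← hsum, ← Finset.univ_sigma_univ, Finset.sum_sigma]
      refine Finset.sum_congr rfl fun k _ => Finset.sum_congr rfl fun i _ => ?_
      simp [hcf, k.isLt, hvE]
    have h2 := keyE N cf h1
    rintro ⟨⟨l, hl⟩, i⟩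
    have := h2 l hl i
    simpa [hcf, hl] using this
  have hvFind : ∀ cs : (Σ k : Fin N, Fin (Bp k)) → K, (∑ q, cs q • vF q) = 0 → ∀ q, cs q = 0 := by
    intro cs hsum
    set cf : ∀ l : ℕ, Fin (Bp l) → K :=
      fun l => if h : l < N then (fun i => cs ⟨⟨l, h⟩, i⟩) else fun _ => 0 with hcf
    have h1 : (∑ l ∈ Finset.range N, ∑ i : Fin (Bp l),
        cf l i • f (x l ⟨(i : ℕ), lt_of_lt_of_le i.isLt (hBA l)⟩)) = 0 := by
      rw [← Fin.sum_univ_eq_sum_range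
        (fun l => ∑ i : Fin (Bp l), cf l i • f (x l ⟨(i : ℕ), lt_of_lt_of_le i.isLt (hBA l)⟩)) N]
      rw [← hsum, ← Finset.univ_sigma_univ, Finset.sum_sigma]
      refine Finset.sum_congr rfl fun k _ => Finset.sum_congr rfl fun i _ => ?_
      simp [hcf, k.isLt, hvF]
    have h2 := keyF N cf h1
    rintro ⟨⟨l, hl⟩, i⟩
    have := h2 l hl i
    simpa [hcf, hl] using this
  -- memberships
  have hvEmem : ∀ q, vE q ∈ E N := by
    rintro ⟨k, i⟩
    exact hmono' k.isLt (hxmem k i)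
  have hvFmem : ∀ q, vF q ∈ (E N).map f := by
    rintro ⟨k, i⟩
    exact Submodule.map_mono (hmono' k.isLt) (Submodule.mem_map_of_mem (hxmem k _))
  -- cardinalities
  have hfrmonoE : ∀ k, finrank K (E k) ≤ finrank K (E (k + 1)) :=
    fun k => Submodule.finrank_mono (hmono k)
  have hfrmonoF : ∀ k, finrank K ((E k).map f) ≤ finrank K ((E (k + 1)).map f) :=
    fun k => Submodule.finrank_mono (Submodule.map_mono (hmono k))
  have hcardE : Fintype.card (Σ k : Fin N, Fin (A k)) = finrank K (E N) := by
    rw [Fintype.card_sigma]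
    simp only [Fintype.card_fin]
    rw [Fin.sum_univ_eq_sum_range (fun l => A l) N]
    rw [show (fun l => A l) = fun l => finrank K (E (l + 1)) - finrank K (E l) from rfl]
    rw [nat_telescope hfrmonoE N]
    rw [hE0, finrank_bot]
    omega
  have hcardF : Fintype.card (Σ k : Fin N, Fin (Bp k)) = finrank K ((E N).map f) := by
    rw [Fintype.card_sigma]
    simp only [Fintype.card_fin]
    rw [Fin.sum_univ_eq_sum_range (fun l => Bp l) N]
    rw [show (fun l => Bp l) = fun l => finrank K ((E (l+1)).map f) - finrank K ((E l).map f)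
      from rfl]
    rw [nat_telescope hfrmonoF N]
    rw [hE0, Submodule.map_bot, finrank_bot]
    omega
  obtain ⟨hspanE, hlinE⟩ := span_eq_of_indep vE (E N) hvEmem hvEind (by omega)
  obtain ⟨hspanF, hlinF⟩ := span_eq_of_indep vF ((E N).map f) hvFmem hvFind (by omega)
  -- reindexing along chains
  have hAm : ∀ (k : ℕ), A k ≤ m := fun k => hAanti (Nat.zero_le k)
  set eE : (Σ i : Fin m, Fin (cc (i : ℕ))) ≃ (Σ k : Fin N, Fin (A (k : ℕ))) :=
    { toFun := fun q => ⟨⟨(q.2 : ℕ), lt_of_lt_of_le q.2.isLt (hccN (q.1 : ℕ))⟩,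
        ⟨(q.1 : ℕ), (hcc (q.1 : ℕ) (q.2 : ℕ)).mpr q.2.isLt⟩⟩
      invFun := fun q => ⟨⟨(q.2 : ℕ), lt_of_lt_of_le q.2.isLt (hAm (q.1 : ℕ))⟩,
        ⟨(q.1 : ℕ), (hcc (q.2 : ℕ) (q.1 : ℕ)).mp q.2.isLt⟩⟩
      left_inv := by rintro ⟨⟨iv, hi⟩, ⟨jv, hj⟩⟩; rfl
      right_inv := by rintro ⟨⟨kv, hk⟩, ⟨iv, hi⟩⟩; rfl } with heE
  have hBm : ∀ (k : ℕ), Bp k ≤ m := fun k => (hBA k).trans (hAm k)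
  set eF : (Σ i : Fin m, Fin (rr (i : ℕ))) ≃ (Σ k : Fin N, Fin (Bp (k : ℕ))) :=
    { toFun := fun q => ⟨⟨(q.2 : ℕ), lt_of_lt_of_le q.2.isLt (hrrN (q.1 : ℕ))⟩,
        ⟨(q.1 : ℕ), (hrr (q.1 : ℕ) (q.2 : ℕ)).mpr q.2.isLt⟩⟩
      invFun := fun q => ⟨⟨(q.2 : ℕ), lt_of_lt_of_le q.2.isLt (hBm (q.1 : ℕ))⟩,
        ⟨(q.1 : ℕ), (hrr (q.2 : ℕ) (q.1 : ℕ)).mp q.2.isLt⟩⟩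
      left_inv := by rintro ⟨⟨iv, hi⟩, ⟨jv, hj⟩⟩; rfl
      right_inv := by rintro ⟨⟨kv, hk⟩, ⟨iv, hi⟩⟩; rfl } with heF
  refine ⟨m, fun i => rr (i : ℕ), fun i => cc (i : ℕ), vE ∘ eE, vF ∘ eF, ?_, ?_, ?_, ?_, ?_,
    ?_, ?_, ?_, ?_, ?_⟩
  · intro i
    show cc (i : ℕ) = rr (i : ℕ) ∨ cc (i : ℕ) = rr (i : ℕ) + 1
    have h1 := hrc1 (i : ℕ)
    have h2 := hrc2 (i : ℕ)
    omega
  · exact hlinE.comp eE eE.injective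
  · rw [Set.range_comp, Equiv.range_eq_univ, Set.image_univ]
    exact hspanE
  · exact hlinF.comp eF eF.injective
  · rw [Set.range_comp, Equiv.range_eq_univ, Set.image_univ]
    exact hspanF
  · -- f on a chain vector with j < r i
    intro i j h
    rfl
  · -- f kills the top of an L-chain
    intro i j hj
    replace hj : rr (i : ℕ) ≤ (j : ℕ) := hj
    have hBle : Bp (j : ℕ) ≤ (i : ℕ) := by
      by_contra hcon
      have := (hrr (i : ℕ) (j : ℕ)).mp (by omega)
      omega
    exact hxz (j : ℕ) _ hBle
  · -- g moves down the chain
    intro i j h h2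
    obtain ⟨jv, hjv⟩ := j
    simp only at h h2 ⊢
    obtain ⟨t, rfl⟩ : ∃ t, jv = t + 1 := ⟨jv - 1, by omega⟩
    have hiA : (i : ℕ) < A (t + 1) := (hcc (i : ℕ) (t + 1)).mpr hjv
    have hiA' : (i : ℕ) < A t := lt_of_lt_of_le hiA (hAanti (by omega))
    exact (hxrel t ⟨(i : ℕ), hiA'⟩ hiA).symm
  · -- position bound for g
    intro i j hj
    show (j : ℕ) - 1 < rr (i : ℕ)
    have hiA : (i : ℕ) < A (j : ℕ) := (hcc (i : ℕ) (j : ℕ)).mpr j.isLt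
    have hstep : A (((j : ℕ) - 1) + 1) ≤ Bp ((j : ℕ) - 1) := hAB ((j : ℕ) - 1)
    have hj1 : ((j : ℕ) - 1) + 1 = (j : ℕ) := by omega
    rw [hj1] at hstep
    exact (hrr (i : ℕ) ((j : ℕ) - 1)).mp (by omega)
  · -- g kills the bottom of each chain
    intro i j hj
    obtain ⟨jv, hjv⟩ := j
    simp only at hj
    subst hj
    have hmem0 : x 0 ⟨(i : ℕ), (hcc (i : ℕ) 0).mpr hjv⟩ ∈ E 1 := hxmem 0 _
    rw [hEs 0, hE0, Submodule.map_bot, Submodule.mem_comap, Submodule.mem_bot] at hmem0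
    exact hmem0
end aux

set_option synthInstance.maxHeartbeats 1000000

/-- On the stable spaces `E_N`, `F_N` of the Kronecker towers, the pencil `f + X g` of
the induced maps can be written, in suitable bases, as a block-diagonal matrix whose
blocks are of the form `J_r(1,X)` (square, 1 on the diagonal, X on the superdiagonal)
or `L_s + X K_s` (size `s × (s+1)`, 1 on the diagonal, X on the superdiagonal). -/
theorem stmt_13 {K : Type*} [Field K] {n p : ℕ}
    (A B : Matrix (Fin n) (Fin p) K)
    (hker : LinearMap.ker A.mulVecLin ⊓ LinearMap.ker B.mulVecLin = ⊥)
    (Es : ℕ → Submodule K (Fin p → K)) (Fs : ℕ → Submodule K (Fin n → K))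
    (hE0 : Es 0 = ⊥) (hF0 : Fs 0 = ⊥)
    (hE : ∀ k, Es (k + 1) = (Fs k).comap B.mulVecLin)
    (hF : ∀ k, Fs (k + 1) = (Es (k + 1)).map A.mulVecLin)
    (N : ℕ) (hN : Es (N + 1) = Es N)
    (f g : Es N →ₗ[K] Fs N)
    (hf : ∀ x : Es N, (f x : Fin n → K) = A.mulVec (x : Fin p → K))
    (hg : ∀ x : Es N, (g x : Fin n → K) = B.mulVec (x : Fin p → K)) :
    ∃ (m : ℕ) (r c : Fin m → ℕ)
      (bE : Basis (Σ i, Fin (c i)) K (Es N)) (bF : Basis (Σ i, Fin (r i)) K (Fs N))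
      (blk : ∀ i, Matrix (Fin (r i)) (Fin (c i)) (Polynomial K)),
      (∀ i, (c i = r i ∨ c i = r i + 1) ∧
        ∀ (a : Fin (r i)) (b : Fin (c i)),
          blk i a b = if (b : ℕ) = (a : ℕ) then 1
            else if (b : ℕ) = (a : ℕ) + 1 then Polynomial.X else 0) ∧
      (LinearMap.toMatrix bE bF f).map Polynomial.C
          + (Polynomial.X : Polynomial K) • (LinearMap.toMatrix bE bF g).map Polynomial.C
        = Matrix.blockDiagonal' blk := by
  classical
  have hFs' : ∀ k, Fs k = (Es k).map A.mulVecLin := by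
    intro k
    cases k with
    | zero => rw [hF0, hE0, Submodule.map_bot]
    | succ k => exact hF k
  have hEs' : ∀ k, Es (k + 1) = ((Es k).map A.mulVecLin).comap B.mulVecLin := by
    intro k
    rw [hE k, hFs' k]
  obtain ⟨m, r, c, e, φ, hrc, hlinE, hspanE, hlinF, hspanF, hfe, hfe0, hge, hge', hge0⟩ :=
    kronecker_chains A.mulVecLin B.mulVecLin Es hE0 hEs' N hN
  -- build the bases
  have hememN : ∀ q, e q ∈ Es N := fun q => hspanE ▸ subset_span ⟨q, rfl⟩
  have hφmemN : ∀ q, φ q ∈ Fs N := fun q => by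
    rw [hFs' N]
    exact hspanF ▸ subset_span ⟨q, rfl⟩
  set ebar : (Σ i : Fin m, Fin (c i)) → ↥(Es N) := fun q => ⟨e q, hememN q⟩ with hebar
  set φbar : (Σ i : Fin m, Fin (r i)) → ↥(Fs N) := fun q => ⟨φ q, hφmemN q⟩ with hφbar
  have hlinE' : LinearIndependent K ebar := LinearIndependent.of_comp (Es N).subtype hlinE
  have hlinF' : LinearIndependent K φbar := LinearIndependent.of_comp (Fs N).subtype hlinF
  have hspanE' : ⊤ ≤ span K (Set.range ebar) := by
    have hmap : Submodule.map (Es N).subtype (span K (Set.range ebar)) =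
        Submodule.map (Es N).subtype ⊤ := by
      rw [Submodule.map_span, Submodule.map_subtype_top, ← Set.range_comp]
      exact hspanE
    exact ge_of_eq (Submodule.map_injective_of_injective (Es N).injective_subtype hmap)
  have hspanF' : ⊤ ≤ span K (Set.range φbar) := by
    have hmap : Submodule.map (Fs N).subtype (span K (Set.range φbar)) =
        Submodule.map (Fs N).subtype ⊤ := by
      rw [Submodule.map_span, Submodule.map_subtype_top, ← Set.range_comp]
      rw [show ⇑(Fs N).subtype ∘ φbar = φ from rfl, hspanF]
      exact (hFs' N).symm
    exact ge_of_eq (Submodule.map_injective_of_injective (Fs N).injective_subtype hmap)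
  set bE : Basis (Σ i : Fin m, Fin (c i)) K ↥(Es N) := Basis.mk hlinE' hspanE' with hbE
  set bF : Basis (Σ i : Fin m, Fin (r i)) K ↥(Fs N) := Basis.mk hlinF' hspanF' with hbF
  set blk : ∀ i : Fin m, Matrix (Fin (r i)) (Fin (c i)) (Polynomial K) :=
    fun i a b => if (b : ℕ) = (a : ℕ) then 1
      else if (b : ℕ) = (a : ℕ) + 1 then Polynomial.X else 0 with hblk
  refine ⟨m, r, c, bE, bF, blk, fun i => ⟨hrc i, fun a b => rfl⟩, ?_⟩
  -- the values of f and g on the basis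
  have hbEapp : ∀ q, bE q = ebar q := fun q => by rw [hbE, Basis.mk_apply]
  have hbFapp : ∀ q, bF q = φbar q := fun q => by rw [hbF, Basis.mk_apply]
  have hfval : ∀ (i' : Fin m) (b : Fin (c i')),
      f (bE ⟨i', b⟩) = if h : (b : ℕ) < r i' then bF ⟨i', ⟨b, h⟩⟩ else 0 := by
    intro i' b
    apply Subtype.ext
    rw [hf]
    split_ifs with h
    · show A.mulVec ((bE ⟨i', b⟩ : ↥(Es N)) : Fin p → K) = ((bF ⟨i', ⟨b, h⟩⟩ : ↥(Fs N)) : Fin n → K)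
      rw [hbEapp, hbFapp]
      show A.mulVec (e ⟨i', b⟩) = φ ⟨i', ⟨b, h⟩⟩
      rw [← Matrix.mulVecLin_apply]
      exact hfe i' b h
    · show A.mulVec ((bE ⟨i', b⟩ : ↥(Es N)) : Fin p → K) = ((0 : ↥(Fs N)) : Fin n → K)
      rw [hbEapp]
      show A.mulVec (e ⟨i', b⟩) = (0 : Fin n → K)
      rw [← Matrix.mulVecLin_apply]
      exact hfe0 i' b (le_of_not_gt h)
  have hgval : ∀ (i' : Fin m) (b : Fin (c i')),
      g (bE ⟨i', b⟩) = if h : 0 < (b : ℕ) then bF ⟨i', ⟨(b : ℕ) - 1, hge' i' b h⟩⟩ else 0 := by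
    intro i' b
    apply Subtype.ext
    rw [hg]
    split_ifs with h
    · rw [hbEapp, hbFapp]
      show B.mulVec (e ⟨i', b⟩) = φ ⟨i', ⟨(b : ℕ) - 1, hge' i' b h⟩⟩
      rw [← Matrix.mulVecLin_apply]
      exact hge i' b h (hge' i' b h)
    · rw [hbEapp]
      show B.mulVec (e ⟨i', b⟩) = (0 : Fin n → K)
      rw [← Matrix.mulVecLin_apply]
      exact hge0 i' b (by omega)
  -- entrywise identity
  refine Matrix.ext ?_
  rintro ⟨i, a⟩ ⟨i', b⟩
  simp only [Matrix.add_apply, Matrix.map_apply, Matrix.smul_apply, LinearMap.toMatrix_apply,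
    smul_eq_mul]
  rw [hfval, hgval]
  rcases eq_or_ne i i' with rfl | hii
  · rw [Matrix.blockDiagonal'_apply_eq]
    have hrepr1 : (bF.repr (if h : (b : ℕ) < r i then bF ⟨i, ⟨(b : ℕ), h⟩⟩ else 0)) ⟨i, a⟩
        = if (b : ℕ) = (a : ℕ) then 1 else 0 := by
      by_cases hba : (b : ℕ) = (a : ℕ)
      · have hbr : (b : ℕ) < r i := by have := a.isLt; omega
        rw [dif_pos hbr, if_pos hba]
        rw [show (⟨(b : ℕ), hbr⟩ : Fin (r i)) = a from Fin.ext hba]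
        simp [Basis.repr_self_apply]
      · rw [if_neg hba]
        by_cases hbr : (b : ℕ) < r i
        · rw [dif_pos hbr, Basis.repr_self_apply, if_neg]
          intro hcon
          have := congrArg (fun q : (Σ i : Fin m, Fin (r i)) => (q.2 : ℕ)) hcon
          simp at this
          exact hba this
        · rw [dif_neg hbr]; simp
    have hrepr2 : (bF.repr (if h : 0 < (b : ℕ) then bF ⟨i, ⟨(b : ℕ) - 1, hge' i b h⟩⟩ else 0))
        ⟨i, a⟩ = if (b : ℕ) = (a : ℕ) + 1 then 1 else 0 := by
      by_cases hba : (b : ℕ) = (a : ℕ) + 1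
      · have hb0 : 0 < (b : ℕ) := by omega
        rw [dif_pos hb0, if_pos hba]
        rw [show (⟨(b : ℕ) - 1, hge' i b hb0⟩ : Fin (r i)) = a from Fin.ext (by simp; omega)]
        simp [Basis.repr_self_apply]
      · rw [if_neg hba]
        by_cases hb0 : 0 < (b : ℕ)
        · rw [dif_pos hb0, Basis.repr_self_apply, if_neg]
          intro hcon
          have := congrArg (fun q : (Σ i : Fin m, Fin (r i)) => (q.2 : ℕ)) hcon
          simp at this
          omega
        · rw [dif_neg hb0]; simp
    rw [hrepr1, hrepr2]
    show Polynomial.C (if (b : ℕ) = (a : ℕ) then 1 else 0)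
        + Polynomial.X * Polynomial.C (if (b : ℕ) = (a : ℕ) + 1 then 1 else 0)
      = if (b : ℕ) = (a : ℕ) then 1 else if (b : ℕ) = (a : ℕ) + 1 then Polynomial.X else 0
    by_cases h1 : (b : ℕ) = (a : ℕ)
    · have h2 : ¬ ((b : ℕ) = (a : ℕ) + 1) := by omega
      rw [if_pos h1, if_pos h1, if_neg h2]
      simp
    · rw [if_neg h1, if_neg h1]
      by_cases h2 : (b : ℕ) = (a : ℕ) + 1
      · rw [if_pos h2, if_pos h2]
        simp
      · rw [if_neg h2, if_neg h2]
        simp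
  · rw [Matrix.blockDiagonal'_apply_ne _ _ _ hii]
    have h1 : ∀ (z : ↥(Fs N)),
        (z = 0 ∨ ∃ q : (Σ i : Fin m, Fin (r i)), q.1 = i' ∧ z = bF q) →
        bF.repr z ⟨i, a⟩ = 0 := by
      rintro z (rfl | ⟨q, hq1, rfl⟩)
      · simp
      · rw [Basis.repr_self_apply, if_neg]
        intro hcon
        have := congrArg (fun q : (Σ i : Fin m, Fin (r i)) => q.1) hcon
        simp at this
        exact hii (by rw [← hq1, this])
    rw [h1 _ ?_, h1 _ ?_]
    · simp
    · split_ifs with h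
      · exact Or.inr ⟨_, rfl, rfl⟩
      · exact Or.inl rfl
    · split_ifs with h
      · exact Or.inr ⟨_, rfl, rfl⟩
      · exact Or.inl rfl
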